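/- arXiv:2212.00391 — 3 statements merged into one kernel-verified Lean document; each statement's English description precedes it below -/
import Mathlib

section
/- Let b, σ > 0, θ > -σ²/2, r, p ∈ ℝ, δ > 0, q ∈ (0,1), and m > 0. Let η = -(1/2 + θ/σ²) + √((1/2 + θ/σ²)² + q m/(δσ²)). Define φ(z) = z^{-η} on (0,∞) and λ = bη - pr/δ. Then for all z > 0, (1/2)σ²z³ φ''(z) + (bz - θz²) φ'(z) + (1/δ)(pr - (q/2) m z) φ(z) = -λ φ(z). -/
/-- Hansen–Scheinkman eigenpair `(λ, φ)` with `φ(z) = z^{-η}` for the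
3/2 state process model. -/
theorem stmt_1 (b σ θ r p δ q m : ℝ) (hb : 0 < b) (hσ : 0 < σ) (hθ : -σ^2/2 < θ)
    (hδ : 0 < δ) (hq : q ∈ Set.Ioo (0:ℝ) 1) (hm : 0 < m)
    (η : ℝ) (hη : η = -(1/2 + θ/σ^2) + Real.sqrt ((1/2 + θ/σ^2)^2 + q*m/(δ*σ^2)))
    (φ : ℝ → ℝ) (hφ : ∀ z : ℝ, φ z = z ^ (-η))
    (lam : ℝ) (hlam : lam = b*η - p*r/δ) :
    ∀ z : ℝ, 0 < z →
      (1/2)*σ^2*z^3 * deriv (deriv φ) z + (b*z - θ*z^2) * deriv φ z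
        + (1/δ)*(p*r - (q/2)*m*z) * φ z = -lam * φ z := by
  have hφf : φ = fun z : ℝ => z ^ (-η) := funext hφ
  subst hφf hlam
  intro z hz
  have hσ2 : (0:ℝ) < σ^2 := by positivity
  -- quadratic relation for η
  set A : ℝ := 1/2 + θ/σ^2 with hA
  have hpos : (0:ℝ) ≤ A^2 + q*m/(δ*σ^2) := by
    have : 0 < q*m/(δ*σ^2) := by
      have := hq.1
      positivity
    nlinarith [sq_nonneg A]
  have hs : Real.sqrt (A^2 + q*m/(δ*σ^2)) ^ 2 = A^2 + q*m/(δ*σ^2) :=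
    Real.sq_sqrt hpos
  have hquad : η^2 + (1 + 2*θ/σ^2) * η = q*m/(δ*σ^2) := by
    have h2A : 1 + 2*θ/σ^2 = 2*A := by rw [hA]; field_simp
    rw [hη, h2A]; linear_combination hs
  have hq2 : δ*σ^2*η^2 + δ*(σ^2+2*θ)*η = q*m := by
    have h := hquad
    field_simp at h
    have h' : (δ*σ^2*η^2 + δ*(σ^2+2*θ)*η) * σ^2 = q*m*σ^2 := by linear_combination σ^2 * h
    exact mul_right_cancel₀ hσ2.ne' h'
  -- derivatives
  have hd1 : ∀ x : ℝ, x ≠ 0 → deriv (fun y : ℝ => y ^ (-η)) x = -η * x ^ (-η - 1) :=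
    fun x hx => Real.deriv_rpow_const x (-η)
  have hev : deriv (fun y : ℝ => y ^ (-η)) =ᶠ[nhds z]
      (fun y : ℝ => -η * y ^ (-η - 1)) := by
    filter_upwards [eventually_ne_nhds hz.ne'] with x hx using hd1 x hx
  have hd2 : deriv (deriv (fun y : ℝ => y ^ (-η))) z
      = -η * ((-η - 1) * z ^ (-η - 1 - 1)) := by
    rw [hev.deriv_eq]
    exact ((Real.hasDerivAt_rpow_const (p := -η - 1) (Or.inl hz.ne')).const_mul (-η)).deriv
  rw [hd2, hd1 z hz.ne']
  have h1 : z ^ (-η - 1) = z ^ (-η) / z := by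
    rw [Real.rpow_sub hz, Real.rpow_one]
  have h2 : z ^ (-η - 1 - 1) = z ^ (-η) / z^2 := by
    rw [Real.rpow_sub hz, Real.rpow_sub hz, Real.rpow_one]
    ring
  rw [h1, h2]
  have hw : (0:ℝ) < z ^ (-η) := Real.rpow_pos_of_pos hz _
  field_simp
  linear_combination z * hq2
end

section
/- Let b, σ > 0, θ > -σ²/2, r, p ∈ ℝ, δ > 0, q ∈ (0,1), m > 0. Let η = (-(σ²/2 + θ) + √((σ²/2 + θ)² + qσ²m/δ))/σ², ξ = bη/(σ²(η+1) + θ), and λ = -(1/2)σ²ξ² + bξ - pr/δ. Define φ(z) = z^{-η} e^{ξ/z} on (0,∞). Then for all z > 0, (1/2)σ²z⁴ φ''(z) + (bz² - θz³) φ'(z) + (1/δ)(pr - (q/2) m z²) φ(z) = -λ φ(z). -/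
set_option maxHeartbeats 1000000


/-- Hansen–Scheinkman eigenpair `(λ, φ)` with `φ(z) = z^{-η} e^{ξ/z}`
for the inverse Bessel state process model. -/
theorem stmt_2 (b σ θ r p δ q m : ℝ) (hb : 0 < b) (hσ : 0 < σ) (hθ : -σ^2/2 < θ)
    (hδ : 0 < δ) (hq : q ∈ Set.Ioo (0:ℝ) 1) (hm : 0 < m)
    (η ξ lam : ℝ)
    (hη : η = (-(σ^2/2 + θ) + Real.sqrt ((σ^2/2 + θ)^2 + q*σ^2*m/δ))/σ^2)
    (hξ : ξ = b*η/(σ^2*(η+1) + θ))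
    (hlam : lam = -(1/2)*σ^2*ξ^2 + b*ξ - p*r/δ)
    (φ : ℝ → ℝ) (hφ : ∀ z : ℝ, φ z = z ^ (-η) * Real.exp (ξ/z)) :
    ∀ z : ℝ, 0 < z →
      (1/2)*σ^2*z^4 * deriv (deriv φ) z + (b*z^2 - θ*z^3) * deriv φ z
        + (1/δ)*(p*r - (q/2)*m*z^2) * φ z = -lam * φ z := by
  have hσ2 : (0:ℝ) < σ^2 := by positivity
  have hδ0 : δ ≠ 0 := hδ.ne'
  set A : ℝ := σ^2/2 + θ with hA
  have hc : (0:ℝ) < q*σ^2*m/δ := by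
    have := hq.1; positivity
  have hX : (0:ℝ) ≤ A^2 + q*σ^2*m/δ := by positivity
  -- η is nonnegative
  have hsqrt_ge : A ≤ Real.sqrt (A^2 + q*σ^2*m/δ) := by
    calc A ≤ |A| := le_abs_self A
    _ = Real.sqrt (A^2) := (Real.sqrt_sq_eq_abs A).symm
    _ ≤ Real.sqrt (A^2 + q*σ^2*m/δ) := Real.sqrt_le_sqrt (by linarith)
  have hηnn : 0 ≤ η := by
    rw [hη]
    apply div_nonneg _ hσ2.le
    linarith
  -- key algebraic identity for η
  have hsq : (Real.sqrt (A^2 + q*σ^2*m/δ))^2 = A^2 + q*σ^2*m/δ := Real.sq_sqrt hX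
  have hηA : σ^2*η = -A + Real.sqrt (A^2 + q*σ^2*m/δ) := by
    rw [hη]; field_simp
  have he1 : δ*(σ^2*η^2 + (σ^2 + 2*θ)*η) = q*m := by
    have h2 : (σ^2*η + A)^2 = A^2 + q*σ^2*m/δ := by
      rw [show σ^2*η + A = Real.sqrt (A^2 + q*σ^2*m/δ) by linarith [hηA]]
      exact hsq
    have h3 : σ^4*η^2 + 2*σ^2*η*A = q*σ^2*m/δ := by nlinarith [h2]
    have h4 : δ*(σ^4*η^2 + 2*σ^2*η*A) = q*σ^2*m := by
      rw [h3]; field_simp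
    have hσ0 : σ^2 ≠ 0 := hσ2.ne'
    have : σ^2 * (δ*(σ^2*η^2 + (σ^2 + 2*θ)*η)) = σ^2 * (q*m) := by
      rw [hA] at h4; ring_nf; ring_nf at h4; linarith [h4]
    exact mul_left_cancel₀ hσ0 this
  -- key identity for ξ
  have hden : σ^2*(η+1) + θ ≠ 0 := by
    have : σ^2/2 < σ^2*(η+1) + θ := by nlinarith
    linarith
  have he2 : ξ*(σ^2*(η+1) + θ) = b*η := by
    rw [hξ]; field_simp
  -- first derivative
  have hP : ∀ w : ℝ, 0 < w → HasDerivAt φ (φ w * (-η/w - ξ/w^2)) w := by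
    intro w hw
    have h1 : HasDerivAt (fun x : ℝ => x ^ (-η)) (-η * w ^ (-η - 1)) w :=
      Real.hasDerivAt_rpow_const (Or.inl hw.ne')
    have h2 : HasDerivAt (fun x : ℝ => ξ / x) (-ξ/w^2) w := by
      simpa [div_eq_mul_inv, mul_comm] using ((hasDerivAt_inv hw.ne').const_mul ξ)
    have h3 := h2.exp
    have h4 : HasDerivAt (fun x : ℝ => x ^ (-η) * Real.exp (ξ/x)) (-η * w ^ (-η - 1) * Real.exp (ξ / w) + w ^ (-η) * (Real.exp (ξ / w) * (-ξ / w ^ 2))) w := h1.fun_mul h3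
    have hfun : φ = fun x : ℝ => x ^ (-η) * Real.exp (ξ/x) := funext hφ
    rw [hfun]
    convert h4 using 1
    simp only [Real.rpow_sub hw, Real.rpow_one]
    have hw0 : w ≠ 0 := hw.ne'
    field_simp
    ring
  intro z hz
  have hz0 : z ≠ 0 := hz.ne'
  have hd1 : deriv φ z = φ z * (-η/z - ξ/z^2) := (hP z hz).deriv
  -- deriv φ agrees with the closed form near z
  have hev : deriv φ =ᶠ[nhds z] (fun w => φ w * (-η/w - ξ/w^2)) := by
    filter_upwards [isOpen_Ioi.mem_nhds (show z ∈ Set.Ioi (0:ℝ) from hz)] with w hw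
    exact (hP w hw).deriv
  -- second derivative
  have hA' : HasDerivAt (fun w : ℝ => -η/w - ξ/w^2) (η/z^2 + 2*ξ/z^3) z := by
    have h1 : HasDerivAt (fun w : ℝ => -η/w) (η/z^2) z := by
      simpa [div_eq_mul_inv, mul_comm] using ((hasDerivAt_inv hz0).const_mul (-η))
    have h2 : HasDerivAt (fun w : ℝ => ξ/w^2) (-2*ξ/z^3) z := by
      have h0 : HasDerivAt (fun w : ℝ => (w^2)⁻¹) (-(2*z)/(z^2)^2) z := by
        have := (hasDerivAt_pow 2 z)
        simpa using this.fun_inv (pow_ne_zero 2 hz0)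
      have : HasDerivAt (fun y : ℝ => ξ * (y^2)⁻¹) (ξ * (-(2 * z) / (z ^ 2) ^ 2)) z := h0.const_mul ξ
      convert this using 1
      · funext y; exact (div_eq_mul_inv ξ (y^2)).symm
      rw [eq_comm, mul_div_assoc', div_eq_div_iff (pow_ne_zero _ (pow_ne_zero _ hz0)) (pow_ne_zero _ hz0)]
      ring
    convert (show HasDerivAt (fun w : ℝ => -η/w - ξ/w^2) (η/z^2 - -2*ξ/z^3) z from h1.fun_sub h2) using 1
    ring
  have hg : HasDerivAt (fun w => φ w * (-η/w - ξ/w^2))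
      (φ z * (-η/z - ξ/z^2) * (-η/z - ξ/z^2) + φ z * (η/z^2 + 2*ξ/z^3)) z :=
    (hP z hz).mul hA'
  have hd2 : deriv (deriv φ) z
      = φ z * (-η/z - ξ/z^2) * (-η/z - ξ/z^2) + φ z * (η/z^2 + 2*ξ/z^3) := by
    rw [hev.deriv_eq]
    exact hg.deriv
  -- scalar identity
  have key : (1/2)*σ^2*z^4 * ((-η/z - ξ/z^2)^2 + (η/z^2 + 2*ξ/z^3))
      + (b*z^2 - θ*z^3) * (-η/z - ξ/z^2)
      + (1/δ)*(p*r - (q/2)*m*z^2) = -lam := by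
    rw [hlam]
    field_simp
    ring_nf
    linear_combination (z^2)*he1 + (2*z*δ)*he2
  rw [hd1, hd2]
  linear_combination (φ z) * key
end

section
/- Let θ ∈ ℝⁿ be a nonzero vector, a ∈ ℝ, q ∈ (0,1), δ > 0, μ ∈ ℝⁿ, and assume a + qθ'μ > 0. Define η = (-(a + qθ'μ) + √((a + qθ'μ)² + (q/δ)‖θ‖²‖μ‖²))/(2‖θ‖²), ξ = 2bη/(a + qθ'μ + 2‖θ‖²η) for b ∈ ℝ, and λ = (η - ξ²/2)‖θ‖² + bξ - pr/δ for p, r ∈ ℝ. Then φ(z) = e^{-ηz² - ξz} satisfies, for all z ∈ ℝ, (1/2)‖θ‖² φ''(z) + (b - (a + qθ'μ)z) φ'(z) + (1/δ)(pr - (q/2)‖μ‖²z²) φ(z) = -λ φ(z). -/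
/-- Hansen–Scheinkman eigenpair `(λ, φ)` with `φ(z) = e^{-ηz² - ξz}`
for the filtered Ornstein–Uhlenbeck state process model. -/
theorem stmt_15 {n : ℕ} (θ μ : EuclideanSpace ℝ (Fin n)) (hθ : θ ≠ 0)
    (a q δ b p r : ℝ) (hq : q ∈ Set.Ioo (0:ℝ) 1) (hδ : 0 < δ)
    (hA : 0 < a + q * (inner ℝ θ μ : ℝ))
    (η ξ lam : ℝ)
    (hη : η = (-(a + q*(inner ℝ θ μ : ℝ))
        + Real.sqrt ((a + q*(inner ℝ θ μ : ℝ))^2 + (q/δ)*‖θ‖^2*‖μ‖^2))/(2*‖θ‖^2))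
    (hξ : ξ = 2*b*η/(a + q*(inner ℝ θ μ : ℝ) + 2*‖θ‖^2*η))
    (hlam : lam = (η - ξ^2/2)*‖θ‖^2 + b*ξ - p*r/δ)
    (φ : ℝ → ℝ) (hφ : ∀ z : ℝ, φ z = Real.exp (-η*z^2 - ξ*z)) :
    ∀ z : ℝ,
      (1/2)*‖θ‖^2 * deriv (deriv φ) z + (b - (a + q*(inner ℝ θ μ : ℝ))*z) * deriv φ z
        + (1/δ)*(p*r - (q/2)*‖μ‖^2*z^2) * φ z = -lam * φ z := by
  intro z
  have hφfun : φ = fun w : ℝ => Real.exp (-η*w^2 - ξ*w) := funext hφ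
  set A : ℝ := a + q * (inner ℝ θ μ : ℝ) with hAdef
  set T : ℝ := ‖θ‖^2 with hTdef
  set M : ℝ := ‖μ‖^2 with hMdef
  have hT : (0:ℝ) < T := by
    have : (0:ℝ) < ‖θ‖ := norm_pos_iff.mpr hθ
    positivity
  have hM : (0:ℝ) ≤ M := by positivity
  set s : ℝ := Real.sqrt (A^2 + (q/δ)*T*M) with hsdef
  have harg : 0 ≤ A^2 + (q/δ)*T*M := by
    have h1 : 0 ≤ (q/δ)*T*M :=
      mul_nonneg (mul_nonneg (div_nonneg hq.1.le hδ.le) hT.le) hM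
    nlinarith [sq_nonneg A]
  have hs : s^2 = A^2 + (q/δ)*T*M := Real.sq_sqrt harg
  have hsA : A ≤ s := by
    have h0 : 0 ≤ (q/δ)*T*M :=
      mul_nonneg (mul_nonneg (div_nonneg hq.1.le hδ.le) hT.le) hM
    have h1 : Real.sqrt (A^2) ≤ s := Real.sqrt_le_sqrt (by linarith)
    have h2 : Real.sqrt (A^2) = |A| := by
      rw [← Real.sqrt_sq_eq_abs]
    calc A ≤ |A| := le_abs_self A
      _ = Real.sqrt (A^2) := h2.symm
      _ ≤ s := h1
  have hηnn : 0 ≤ η := by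
    rw [hη]
    apply div_nonneg (by linarith) (by linarith)
  have h2Tη : 2*T*η = s - A := by
    rw [hη]; field_simp; ring
  have fact1 : 2*T*η^2 + 2*A*η = q*M/(2*δ) := by
    have h3 : (2*T*η)^2 + 2*A*(2*T*η) = (q/δ)*T*M := by
      rw [h2Tη]; linear_combination hs
    have h4 : 2*T*(2*T*η^2 + 2*A*η) = 2*T*(q*M/(2*δ)) := by
      have hδ' : δ ≠ 0 := ne_of_gt hδ
      linear_combination h3
    exact mul_left_cancel₀ (by positivity) h4
  have hden : 0 < A + 2*T*η := by nlinarith [mul_nonneg hT.le hηnn]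
  have fact2 : ξ*(A + 2*T*η) = 2*b*η := by
    rw [hξ]; field_simp [ne_of_gt hden]
  -- derivatives
  have hlin : ∀ w : ℝ, HasDerivAt (fun x : ℝ => -η*x^2 - ξ*x) (-(2*η*w) - ξ) w := by
    intro w
    have h2 := (((hasDerivAt_pow 2 w).const_mul (-η)).sub ((hasDerivAt_id w).const_mul ξ))
    have h3 : HasDerivAt (fun x : ℝ => -η*x^2 - ξ*x) (-η*((2:ℕ)*w^(2-1)) - ξ*1) w := by
      simpa [Pi.sub_def] using h2
    have he : -η*((2:ℕ)*w^(2-1)) - ξ*1 = -(2*η*w) - ξ := by push_cast; ring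
    rw [he] at h3
    exact h3
  have hderiv : deriv φ = fun w : ℝ => Real.exp (-η*w^2 - ξ*w) * (-(2*η*w) - ξ) := by
    funext w
    rw [hφfun]
    exact ((hlin w).exp).deriv
  have hderiv2 : deriv (deriv φ) z
      = Real.exp (-η*z^2 - ξ*z) * ((-(2*η*z) - ξ)^2 - 2*η) := by
    rw [hderiv]
    have h2 : HasDerivAt (fun x : ℝ => -(2*η*x) - ξ) (-(2*η)) z := by
      have h3 := (((hasDerivAt_id z).const_mul (2*η)).neg).sub_const ξ
      have he : -(2*η*1) = -(2*η) := by ring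
      rw [he] at h3
      exact h3
    have h4 := ((hlin z).exp).mul h2
    rw [show (fun w : ℝ => Real.exp (-η*w^2 - ξ*w) * (-(2*η*w) - ξ)) = ((fun x : ℝ => Real.exp (-η*x^2 - ξ*x)) * fun x : ℝ => -(2*η*x) - ξ) from rfl, h4.deriv]
    ring
  rw [hderiv2, hderiv, hφ z]
  linear_combination (Real.exp (-η*z^2 - ξ*z) * z^2) * fact1
    + (Real.exp (-η*z^2 - ξ*z) * z) * fact2
    + Real.exp (-η*z^2 - ξ*z) * hlam
end
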